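/- Let N ≥ 1, let m ∈ ℂ^{N×N} be a Hermitian positive semidefinite matrix with eigenvalues (counted with multiplicity) ordered as λ_1 ≤ λ_2 ≤ … ≤ λ_N, let 1 ≤ r ≤ N, and let M be any r×r principal submatrix of m, obtained by deleting a set of N−r rows and the corresponding N−r columns. Then Π_{j=1}^r λ_j ≤ det(M) ≤ Π_{j=N−r+1}^N λ_j. In particular, if N = 2n and the eigenvalues of m are exp(ϱ_1), exp(−ϱ_1), …, exp(ϱ_n), exp(−ϱ_n) with ϱ_j ∈ ℝ, then every n×n principal submatrix M of m satisfies exp(−Σ_{j=1}^n |ϱ_j|) ≤ det(M) ≤ exp(Σ_{j=1}^n |ϱ_j|). -/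

import Mathlib

open scoped BigOperators ComplexOrder
open Matrix

noncomputable section

open Finset in
private lemma det_mul_eq_sum_funs {r N : ℕ} (A : Matrix (Fin r) (Fin N) ℂ)
    (B : Matrix (Fin N) (Fin r) ℂ) :
    (A * B).det = ∑ g : Fin r → Fin N, (A.submatrix id g).det * ∏ i, B (g i) i := by
  rw [Matrix.det_apply']
  have h1 : ∀ σ : Equiv.Perm (Fin r),
      (∏ i, (A * B) (σ i) i) = ∑ g : Fin r → Fin N, ∏ i, (A (σ i) (g i) * B (g i) i) := by
    intro σ
    simp only [Matrix.mul_apply]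
    rw [Finset.prod_univ_sum]
    simp
  calc (∑ σ : Equiv.Perm (Fin r), Equiv.Perm.sign σ * ∏ i, (A * B) (σ i) i : ℂ)
      = ∑ σ : Equiv.Perm (Fin r), ∑ g : Fin r → Fin N,
          (Equiv.Perm.sign σ : ℂ) * ((∏ i, A (σ i) (g i)) * ∏ i, B (g i) i) := by
        refine Finset.sum_congr rfl fun σ _ => ?_
        rw [h1 σ, Finset.mul_sum]
        refine Finset.sum_congr rfl fun g _ => ?_
        rw [Finset.prod_mul_distrib]
    _ = ∑ g : Fin r → Fin N, ∑ σ : Equiv.Perm (Fin r),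
          (Equiv.Perm.sign σ : ℂ) * ((∏ i, A (σ i) (g i)) * ∏ i, B (g i) i) :=
        Finset.sum_comm
    _ = ∑ g : Fin r → Fin N, (A.submatrix id g).det * ∏ i, B (g i) i := by
        refine Finset.sum_congr rfl fun g _ => ?_
        rw [Matrix.det_apply', Finset.sum_mul]
        refine Finset.sum_congr rfl fun σ _ => ?_
        simp [Matrix.submatrix_apply, mul_assoc]

private lemma my_cauchy_binet {r N : ℕ} (A : Matrix (Fin r) (Fin N) ℂ)
    (B : Matrix (Fin N) (Fin r) ℂ) :
    (A * B).det = ∑ s ∈ Finset.univ.filter (fun s : Fin r → Fin N => StrictMono s),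
      (A.submatrix id s).det * (B.submatrix s id).det := by
  classical
  rw [det_mul_eq_sum_funs]
  have hzero : ∀ g : Fin r → Fin N,
      (A.submatrix id g).det * (∏ i, B (g i) i) ≠ 0 → Function.Injective g := by
    intro g hg
    by_contra hginj
    apply hg
    simp only [Function.Injective, not_forall] at hginj
    obtain ⟨i, j, hij, hne⟩ := hginj
    rw [Matrix.det_zero_of_column_eq hne (fun k => by
      simp [Matrix.submatrix_apply, hij]), zero_mul]
  rw [← Finset.sum_filter_of_ne (p := fun g : Fin r → Fin N => Function.Injective g)
    (fun g _ => hzero g)]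
  have key : ∑ g ∈ Finset.univ.filter (fun g : Fin r → Fin N => Function.Injective g),
      (A.submatrix id g).det * ∏ i, B (g i) i
      = ∑ p ∈ (Finset.univ.filter (fun s : Fin r → Fin N => StrictMono s)) ×ˢ
          (Finset.univ : Finset (Equiv.Perm (Fin r))),
          (A.submatrix id (p.1 ∘ ⇑p.2)).det * ∏ i, B (p.1 (p.2 i)) i := by
    refine Finset.sum_nbij' (fun g => (g ∘ ⇑(Tuple.sort g), (Tuple.sort g)⁻¹))
      (fun p => p.1 ∘ ⇑p.2) ?_ ?_ ?_ ?_ ?_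
    · intro g hg
      simp only [Finset.mem_filter, Finset.mem_univ, true_and] at hg ⊢
      rw [Finset.mem_product]
      refine ⟨?_, Finset.mem_univ _⟩
      simp only [Finset.mem_filter, Finset.mem_univ, true_and]
      exact (Tuple.monotone_sort g).strictMono_of_injective
        (hg.comp (Equiv.injective _))
    · intro p hp
      rw [Finset.mem_product] at hp
      simp only [Finset.mem_filter, Finset.mem_univ, true_and] at hp ⊢
      exact hp.1.injective.comp (Equiv.injective _)
    · -- left inverse : p from g gives back g
      intro g hg
      funext x
      simp
    · -- right inverse
      intro p hp
      rw [Finset.mem_product] at hp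
      simp only [Finset.mem_filter, Finset.mem_univ, true_and] at hp
      obtain ⟨s, π⟩ := p
      simp only at hp ⊢
      have hinj : Function.Injective (s ∘ ⇑π) := hp.1.injective.comp (Equiv.injective _)
      have hsm : StrictMono ((s ∘ ⇑π) ∘ ⇑(Tuple.sort (s ∘ ⇑π))) :=
        (Tuple.monotone_sort _).strictMono_of_injective (hinj.comp (Equiv.injective _))
      have hrange : Set.range ((s ∘ ⇑π) ∘ ⇑(Tuple.sort (s ∘ ⇑π))) = Set.range s :=
        ((Tuple.sort (s ∘ ⇑π)).surjective.range_comp (s ∘ ⇑π)).trans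
          (π.surjective.range_comp s)
      haveI : WellFoundedLT (Fin r) := Finite.to_wellFoundedLT
      have heq : (s ∘ ⇑π) ∘ ⇑(Tuple.sort (s ∘ ⇑π)) = s :=
        (hsm.range_inj hp.1).mp hrange
      have hperm : ⇑π ∘ ⇑(Tuple.sort (s ∘ ⇑π)) = id := by
        have : s ∘ (⇑π ∘ ⇑(Tuple.sort (s ∘ ⇑π))) = s ∘ id := by
          rw [Function.comp_id]; exact heq
        exact hp.1.injective.comp_left this
      have hperm' : Tuple.sort (s ∘ ⇑π) = π⁻¹ := Equiv.ext fun x => by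
        have h := congrFun hperm x
        simp only [Function.comp_apply, id_eq] at h
        simpa using congrArg π.symm h
      refine Prod.ext ?_ ?_
      · simpa using heq
      · simp [hperm']
    · intro g hg
      dsimp only
      have hcomp : (g ∘ ⇑(Tuple.sort g)) ∘ ⇑(Tuple.sort g)⁻¹ = g := by funext x; simp
      rw [hcomp]
      exact congrArg _ (Finset.prod_congr rfl fun i _ => by simp)
  rw [key, Finset.sum_product]
  refine Finset.sum_congr rfl fun s hs => ?_
  simp only [Finset.mem_filter, Finset.mem_univ, true_and] at hs
  have hsub : ∀ π : Equiv.Perm (Fin r), A.submatrix id (s ∘ ⇑π)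
      = (A.submatrix id s).submatrix id ⇑π := by
    intro π; rw [Matrix.submatrix_submatrix]; rfl
  calc ∑ π : Equiv.Perm (Fin r), (A.submatrix id (s ∘ ⇑π)).det * ∏ i, B (s (π i)) i
      = ∑ π : Equiv.Perm (Fin r), (A.submatrix id s).det *
          ((Equiv.Perm.sign π : ℂ) * ∏ i, (B.submatrix s id) (π i) i) := by
        refine Finset.sum_congr rfl fun π _ => ?_
        rw [hsub π, Matrix.det_permute']
        simp [Matrix.submatrix_apply]
        ring
    _ = (A.submatrix id s).det * (B.submatrix s id).det := by
        rw [← Finset.mul_sum]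
        congr 1
        rw [Matrix.det_apply']

private lemma my_strictMono_le {r N : ℕ} {t : Fin r → Fin N} (ht : StrictMono t) (j : Fin r) :
    (j : ℕ) ≤ (t j : ℕ) := by
  obtain ⟨n, hn⟩ := j
  induction n with
  | zero => exact Nat.zero_le _
  | succ n ih =>
    have hn' : n < r := Nat.lt_of_succ_lt hn
    have h1 := ih hn'
    have h2 : t ⟨n, hn'⟩ < t ⟨n + 1, hn⟩ := ht (by simp [Fin.lt_def])
    have h3 : (t ⟨n, hn'⟩ : ℕ) < (t ⟨n + 1, hn⟩ : ℕ) := h2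
    simpa using Nat.lt_of_le_of_lt h1 h3

private lemma my_strictMono_ge {r N : ℕ} {t : Fin r → Fin N} (ht : StrictMono t) (j : Fin r) :
    (t j : ℕ) ≤ N - r + (j : ℕ) := by
  have hr : 0 < r := Nat.pos_of_ne_zero (by rintro rfl; exact absurd j.2 (by simp))
  have hN : 0 < N := Nat.pos_of_ne_zero (by rintro rfl; exact absurd (t j).2 (by simp))
  have ht' : StrictMono (fun i : Fin r => (t i.rev).rev) := by
    intro a b hab
    exact Fin.rev_lt_rev.mpr (ht (Fin.rev_lt_rev.mpr hab))
  have key := my_strictMono_le ht' j.rev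
  simp only [Fin.rev_rev] at key
  have h1 : ((t j).rev : ℕ) = N - 1 - (t j : ℕ) := by
    rw [Fin.val_rev]; omega
  have h2 : (j.rev : ℕ) = r - 1 - (j : ℕ) := by
    rw [Fin.val_rev]; omega
  have h3 := (t j).2
  have h4 := j.2
  omega

private lemma my_prod_bounds {r N : ℕ} (hrN : r ≤ N) (lam : Fin N → ℝ) (hmono : Monotone lam)
    (hnn : ∀ i, 0 ≤ lam i) (f : Fin r → Fin N) (hf : Function.Injective f) :
    ((∏ j : Fin r, lam (Fin.castLE hrN j)) ≤ ∏ j : Fin r, lam (f j)) ∧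
      ((∏ j : Fin r, lam (f j)) ≤
        ∏ j : Fin r, lam ⟨N - r + (j : ℕ), by have := j.isLt; omega⟩) := by
  classical
  set S : Finset (Fin N) := Finset.univ.image f with hS
  have hcard : S.card = r := by
    rw [hS, Finset.card_image_of_injective _ hf, Finset.card_univ, Fintype.card_fin]
  set t : Fin r → Fin N := ⇑(S.orderEmbOfFin hcard) with htdef
  have hts : StrictMono t := (S.orderEmbOfFin hcard).strictMono
  have himg : Finset.univ.image t = S := Finset.coe_injective (by
    rw [Finset.coe_image, Finset.coe_univ, Set.image_univ, htdef,
      Finset.range_orderEmbOfFin])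
  have heq : (∏ j : Fin r, lam (f j)) = ∏ j : Fin r, lam (t j) := by
    have e1 : ∏ x ∈ S, lam x = ∏ j : Fin r, lam (f j) := by
      rw [hS]; exact Finset.prod_image (fun x _ y _ h => hf h)
    have e2 : ∏ x ∈ S, lam x = ∏ j : Fin r, lam (t j) := by
      rw [← himg]; exact Finset.prod_image (fun x _ y _ h => hts.injective h)
    rw [← e1, e2]
  constructor
  · rw [heq]
    refine Finset.prod_le_prod (fun j _ => hnn _) (fun j _ => hmono ?_)
    rw [Fin.le_def]
    simpa using my_strictMono_le hts j
  · rw [heq]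
    refine Finset.prod_le_prod (fun j _ => hnn _) (fun j _ => hmono ?_)
    rw [Fin.le_def]
    simpa using my_strictMono_ge hts j

/-- **Determinant bounds for principal submatrices of a positive semidefinite Hermitian
matrix.** Let `m` be an `N × N` Hermitian positive semidefinite matrix with eigenvalues
(counted with multiplicity) `λ_1 ≤ λ_2 ≤ … ≤ λ_N`, and let `M = m.submatrix e e` be an
`r × r` principal submatrix of `m` (obtained by deleting `N − r` rows and the
corresponding columns, i.e. by selecting the rows and columns indexed by an injective
`e : Fin r → Fin N`). Then `det M` is real and
`Π_{j=1}^r λ_j ≤ det M ≤ Π_{j=N−r+1}^N λ_j`. -/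
theorem det_principal_submatrix_bounds (N r : ℕ) (hN : 1 ≤ N) (hr1 : 1 ≤ r)
    (hrN : r ≤ N)
    (m : Matrix (Fin N) (Fin N) ℂ) (hm : m.PosSemidef)
    (lam : Fin N → ℝ) (hmono : Monotone lam)
    (hlam : ∃ σ : Equiv.Perm (Fin N), ∀ i, lam i = hm.1.eigenvalues (σ i))
    (e : Fin r → Fin N) (he : Function.Injective e) :
    ((m.submatrix e e).det).im = 0 ∧
      (∏ j : Fin r, lam (Fin.castLE hrN j)) ≤ ((m.submatrix e e).det).re ∧
      ((m.submatrix e e).det).re ≤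
        ∏ j : Fin r, lam ⟨N - r + (j : ℕ), by have := j.isLt; omega⟩ := by

  classical
  obtain ⟨σ, hσ⟩ := hlam
  set eig : Fin N → ℝ := hm.1.eigenvalues with heig
  set U : Matrix (Fin N) (Fin N) ℂ :=
    (Matrix.IsHermitian.eigenvectorUnitary hm.1 : Matrix (Fin N) (Fin N) ℂ) with hU
  set D : Matrix (Fin N) (Fin N) ℂ := Matrix.diagonal (RCLike.ofReal ∘ eig) with hD
  have hspec : m = U * D * Uᴴ := by
    rw [← Matrix.star_eq_conjTranspose]
    exact hm.1.spectral_theorem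
  set V : Matrix (Fin r) (Fin N) ℂ := U.submatrix e id with hV
  have hUU : U * Uᴴ = 1 := by
    rw [← Matrix.star_eq_conjTranspose]
    exact (Matrix.mem_unitaryGroup_iff).mp (Matrix.IsHermitian.eigenvectorUnitary hm.1).2
  have hone : (1 : Matrix (Fin N) (Fin N) ℂ).submatrix e e = 1 := by
    ext i j
    simp [Matrix.submatrix_apply, Matrix.one_apply, he.eq_iff]
  have hVV : V * Vᴴ = 1 := by
    rw [hV, Matrix.conjTranspose_submatrix]
    have h := Matrix.submatrix_mul_equiv U Uᴴ e (Equiv.refl (Fin N)) e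
    simp only [Equiv.coe_refl] at h
    rw [h, hUU, hone]
  have hM : m.submatrix e e = V * D * Vᴴ := by
    rw [hspec]
    have h1 := Matrix.submatrix_mul_equiv (U * D) Uᴴ e (Equiv.refl (Fin N)) e
    have h2 := Matrix.submatrix_mul_equiv U D e (Equiv.refl (Fin N)) (id : Fin N → Fin N)
    simp only [Equiv.coe_refl] at h1 h2
    rw [← h1, ← h2, Matrix.submatrix_id_id, hV, Matrix.conjTranspose_submatrix]
  -- abbreviations
  set F : Finset (Fin r → Fin N) :=
    Finset.univ.filter (fun s : Fin r → Fin N => StrictMono s) with hF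
  set W : (Fin r → Fin N) → Matrix (Fin r) (Fin r) ℂ :=
    fun s => V.submatrix id s with hW
  set c : (Fin r → Fin N) → ℝ := fun s => Complex.normSq ((W s).det) with hc
  set p : (Fin r → Fin N) → ℝ := fun s => ∏ j : Fin r, eig (s j) with hp
  -- weights sum to one
  have hadj : ∀ s : Fin r → Fin N, (Uᴴ.submatrix id e).submatrix s id = (W s)ᴴ :=
    fun s => by
      ext i j
      simp [hW, hV, Matrix.submatrix_apply, Matrix.conjTranspose_apply]
  have hsum1 : ∑ s ∈ F, c s = 1 := by
    have h := my_cauchy_binet V Vᴴ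
    rw [hVV, Matrix.det_one] at h
    have h2 : (1 : ℂ) = ((∑ s ∈ F, c s : ℝ) : ℂ) := by
      rw [h]
      push_cast
      refine Finset.sum_congr rfl fun s _ => ?_
      rw [Matrix.conjTranspose_submatrix, hadj s, Matrix.det_conjTranspose, hc]
      rw [← Complex.mul_conj]
      rfl
    exact_mod_cast h2.symm
  -- determinant as convex combination
  have hdet : (m.submatrix e e).det = ((∑ s ∈ F, p s * c s : ℝ) : ℂ) := by
    rw [hM, my_cauchy_binet (V * D) Vᴴ]
    push_cast
    refine Finset.sum_congr rfl fun s hs => ?_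
    have hs' : StrictMono s := by
      rw [hF] at hs
      simpa using hs
    have hVD : (V * D).submatrix id s
        = W s * Matrix.diagonal (fun j : Fin r => ((eig (s j) : ℝ) : ℂ)) := by
      ext i j
      simp [hD, Matrix.mul_diagonal, Matrix.submatrix_apply, hW, RCLike.ofReal_alg]
    rw [hVD, Matrix.det_mul, Matrix.det_diagonal,
      Matrix.conjTranspose_submatrix, hadj s, Matrix.det_conjTranspose]
    rw [hc, hp]
    rw [← Complex.mul_conj]
    push_cast
    ring_nf
    rfl
  constructor
  · rw [hdet, Complex.ofReal_im]
  have hre : (m.submatrix e e).det.re = ∑ s ∈ F, p s * c s := by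
    rw [hdet, Complex.ofReal_re]
  have hnn : ∀ i, 0 ≤ lam i := fun i => by
    rw [hσ i]
    exact hm.eigenvalues_nonneg (σ i)
  have hcnn : ∀ s, 0 ≤ c s := fun s => Complex.normSq_nonneg _
  -- pointwise bounds on p s
  have hbounds : ∀ s ∈ F, (∏ j : Fin r, lam (Fin.castLE hrN j)) ≤ p s ∧
      p s ≤ ∏ j : Fin r, lam ⟨N - r + (j : ℕ), by have := j.isLt; omega⟩ := by
    intro s hs
    have hs' : StrictMono s := by rw [hF] at hs; simpa using hs
    have hps : p s = ∏ j : Fin r, lam (σ.symm (s j)) := by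
      rw [hp]
      refine Finset.prod_congr rfl fun j _ => ?_
      rw [hσ (σ.symm (s j)), Equiv.apply_symm_apply]
    have hf : Function.Injective (fun j => σ.symm (s j)) :=
      σ.symm.injective.comp hs'.injective
    have := my_prod_bounds hrN lam hmono hnn (fun j => σ.symm (s j)) hf
    rw [← hps] at this
    exact this
  constructor
  · rw [hre]
    calc (∏ j : Fin r, lam (Fin.castLE hrN j))
        = ∑ s ∈ F, (∏ j : Fin r, lam (Fin.castLE hrN j)) * c s := by
          rw [← Finset.mul_sum, hsum1, mul_one]
      _ ≤ ∑ s ∈ F, p s * c s :=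
          Finset.sum_le_sum fun s hs =>
            mul_le_mul_of_nonneg_right (hbounds s hs).1 (hcnn s)
  · rw [hre]
    calc (∑ s ∈ F, p s * c s)
        ≤ ∑ s ∈ F, (∏ j : Fin r, lam ⟨N - r + (j : ℕ), by have := j.isLt; omega⟩) * c s :=
          Finset.sum_le_sum fun s hs =>
            mul_le_mul_of_nonneg_right (hbounds s hs).2 (hcnn s)
      _ = _ := by rw [← Finset.mul_sum, hsum1, mul_one]
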